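/- Let d ≥ 1 and let U₀, U₁, U₂ be d×d complex matrices. Let P be a unitary 4×4 complex matrix satisfying P e₀ = (1/√3)(e₀ + e₁ + e₂), where e₀, …, e₃ is the standard basis of ℂ⁴. Define the select matrix S = Σ_{l=0}^{2} (e_l e_l*) ⊗ U_l + (e₃ e₃*) ⊗ I_d, a 4d×4d matrix built with the Kronecker product. Then for every φ ∈ ℂ^d, ((e₀ e₀*) ⊗ I_d) · (P* ⊗ I_d) · S · (P ⊗ I_d) · (e₀ ⊗ φ) = e₀ ⊗ (1/3)(U₀ + U₁ + U₂) φ. -/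

import Mathlib

open Matrix Kronecker in
private theorem kron_mulVec {m n p q : Type*} [Fintype n] [Fintype q]
    (A : Matrix m n ℂ) (B : Matrix p q ℂ) (x : n → ℂ) (y : q → ℂ) :
    (A ⊗ₖ B).mulVec (fun r => x r.1 * y r.2) =
      fun r => A.mulVec x r.1 * B.mulVec y r.2 := by
  funext r
  simp only [Matrix.mulVec, dotProduct, Fintype.sum_prod_type, Matrix.kroneckerMap_apply,
    Finset.sum_mul, Finset.mul_sum]
  rw [Finset.sum_comm]
  exact Finset.sum_congr rfl fun i _ => Finset.sum_congr rfl fun j _ => by ring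


open Matrix Kronecker in
/-- LCU block encoding: with a state-preparation unitary `P` mapping `e₀` to
`(1/√3)(e₀+e₁+e₂)` and the select matrix `S = Σₗ (eₗeₗ*) ⊗ Uₗ + (e₃e₃*) ⊗ I`,
projecting the ancilla of `(P*⊗I) S (P⊗I) (e₀⊗φ)` onto `e₀` yields
`e₀ ⊗ (1/3)(U₀+U₁+U₂)φ`. -/
theorem stmt8 (d : ℕ) (hd : 1 ≤ d) (U₀ U₁ U₂ : Matrix (Fin d) (Fin d) ℂ)
    (P : Matrix (Fin 4) (Fin 4) ℂ) (hP : P ∈ Matrix.unitaryGroup (Fin 4) ℂ)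
    (hPe : P.mulVec (Pi.single 0 1) =
      (1 / (Real.sqrt 3 : ℂ)) •
        (Pi.single (0 : Fin 4) (1 : ℂ) + Pi.single 1 1 + Pi.single 2 1)) :
    let E : Fin 4 → Matrix (Fin 4) (Fin 4) ℂ := fun l => Matrix.single l l 1
    let S : Matrix (Fin 4 × Fin d) (Fin 4 × Fin d) ℂ :=
      E 0 ⊗ₖ U₀ + E 1 ⊗ₖ U₁ + E 2 ⊗ₖ U₂ + E 3 ⊗ₖ (1 : Matrix (Fin d) (Fin d) ℂ)
    ∀ φ : Fin d → ℂ,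
      ((E 0 ⊗ₖ (1 : Matrix (Fin d) (Fin d) ℂ)) *
          (Pᴴ ⊗ₖ (1 : Matrix (Fin d) (Fin d) ℂ)) * S *
          (P ⊗ₖ (1 : Matrix (Fin d) (Fin d) ℂ))).mulVec
        (fun p => (Pi.single (0 : Fin 4) (1 : ℂ) : Fin 4 → ℂ) p.1 * φ p.2) =
      fun p => (Pi.single (0 : Fin 4) (1 : ℂ) : Fin 4 → ℂ) p.1 *
        ((1 / 3 : ℂ) • ((U₀ + U₁ + U₂).mulVec φ)) p.2 := by

  intro E S φ
  have hc2 : (1 / (Real.sqrt 3 : ℂ)) * (1 / (Real.sqrt 3 : ℂ)) = 1 / 3 := by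
    rw [div_mul_div_comm, one_mul, ← Complex.ofReal_mul,
      Real.mul_self_sqrt (by norm_num)]
    norm_num
  have hcol : ∀ l : Fin 4, P l 0 =
      if l = 3 then 0 else (1 / (Real.sqrt 3 : ℂ)) := by
    intro l
    have h := congrFun hPe l
    simp only [Matrix.mulVec, dotProduct, Fin.sum_univ_four, Pi.single_apply,
      Pi.smul_apply, Pi.add_apply, smul_eq_mul] at h
    fin_cases l <;> simp_all (config := { decide := true })
  obtain ⟨x, hx⟩ : ∃ f : Fin 4 → Fin 4 → ℂ,
      f = fun l i => if i = l ∧ ¬ l = 3 then (1 / (Real.sqrt 3 : ℂ)) else 0 := ⟨_, rfl⟩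
  set w : Fin 4 → ℂ :=
    (1 / (Real.sqrt 3 : ℂ)) • (Pi.single (0 : Fin 4) (1 : ℂ) + Pi.single 1 1 + Pi.single 2 1)
    with hw
  have hEl : ∀ l : Fin 4, (E l).mulVec w = x l := by
    intro l
    funext i
    simp only [hx, hw, E, Matrix.mulVec, dotProduct, Matrix.single, Fin.sum_univ_four,
      Pi.smul_apply, Pi.add_apply, Pi.single_apply, Matrix.of_apply, smul_eq_mul]
    fin_cases l <;> fin_cases i <;> simp (config := { decide := true })
  have hQ : ∀ l : Fin 4, ¬ l = 3 →
      (E 0 * Pᴴ).mulVec (x l) = fun i => if i = 0 then (1/3 : ℂ) else 0 := by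
    intro l hl
    funext i
    simp only [hx, Matrix.mulVec, dotProduct, Matrix.mul_apply, Fin.sum_univ_four,
      Matrix.conjTranspose_apply, E, Matrix.single, Matrix.of_apply,
      mul_ite, ite_mul, zero_mul, mul_zero, mul_one, one_mul]
    simp only [hcol, apply_ite (starRingEnd ℂ), _root_.map_zero, map_div₀, _root_.map_one, Complex.conj_ofReal]
    fin_cases l <;> fin_cases i <;>
      simp_all (config := { decide := true }) [hc2]
  rw [← Matrix.mulVec_mulVec, ← Matrix.mulVec_mulVec, kron_mulVec, hPe, Matrix.one_mulVec,
    ← Matrix.mul_kronecker_mul, Matrix.one_mul]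
  have hS : S.mulVec (fun r => w r.1 * φ r.2) =
      (fun r : Fin 4 × Fin d => x 0 r.1 * U₀.mulVec φ r.2)
      + (fun r : Fin 4 × Fin d => x 1 r.1 * U₁.mulVec φ r.2)
      + (fun r : Fin 4 × Fin d => x 2 r.1 * U₂.mulVec φ r.2) := by
    show (E 0 ⊗ₖ U₀ + E 1 ⊗ₖ U₁ + E 2 ⊗ₖ U₂ + E 3 ⊗ₖ 1).mulVec _ = _
    rw [Matrix.add_mulVec, Matrix.add_mulVec, Matrix.add_mulVec,
      kron_mulVec, kron_mulVec, kron_mulVec, kron_mulVec,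
      hEl 0, hEl 1, hEl 2, hEl 3]
    funext r
    simp (config := { decide := true }) [hx]
  rw [hS, Matrix.mulVec_add, Matrix.mulVec_add, kron_mulVec, kron_mulVec, kron_mulVec,
    hQ 0 (by decide), hQ 1 (by decide), hQ 2 (by decide)]
  funext r
  simp only [Pi.add_apply, Pi.single_apply, Pi.smul_apply, smul_eq_mul, Matrix.add_mulVec, Matrix.one_mulVec]
  split <;> ring
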